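/- Let m ≥ 2 and s_{j,i} be defined by binomial(km+1,j) = Σ_i s_{j,i}·binomial(k,i). If m is odd, then for every i ≥ 1, m^i divides s_{i+1,i}. -/

import Mathlib

open Finset fwdDiff

/-- Orthogonality of alternating binomial sums. -/
lemma aux_orth (i r : ℕ) :
    ∑ t ∈ Finset.range (i + 1), (-1 : ℤ) ^ (i - t) * (i.choose t) * (t.choose r)
      = if r = i then 1 else 0 := by
  rcases lt_trichotomy r i with h | h | h
  · rw [if_neg h.ne]
    have hsub : ∑ t ∈ Finset.Ico r (i + 1),
        (-1 : ℤ) ^ (i - t) * (i.choose t) * (t.choose r)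
        = ∑ t ∈ Finset.range (i + 1), (-1 : ℤ) ^ (i - t) * (i.choose t) * (t.choose r) := by
      apply Finset.sum_subset
      · intro t ht
        simp only [Finset.mem_Ico, Finset.mem_range] at ht ⊢
        omega
      · intro t ht ht'
        simp only [Finset.mem_Ico, Finset.mem_range] at ht ht'
        simp [Nat.choose_eq_zero_of_lt (show t < r by omega)]
    rw [← hsub, Finset.sum_Ico_eq_sum_range]
    have hrange : i + 1 - r = (i - r) + 1 := by omega
    rw [hrange]
    have key : ∀ u ∈ Finset.range ((i - r) + 1),
        (-1 : ℤ) ^ (i - (r + u)) * ((i.choose (r + u) : ℤ)) * (((r + u).choose r : ℤ))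
          = ((i.choose r : ℤ) * (-1 : ℤ) ^ (i - r)) * ((-1 : ℤ) ^ u * ((i - r).choose u : ℤ)) := by
      intro u hu
      simp only [Finset.mem_range] at hu
      have h1 : i.choose (r + u) * (r + u).choose r = i.choose r * (i - r).choose u := by
        simpa using Nat.choose_mul (n := i) (show r ≤ r + u by omega)
      have h1' : (i.choose (r + u) : ℤ) * ((r + u).choose r : ℤ)
          = (i.choose r : ℤ) * ((i - r).choose u : ℤ) := by exact_mod_cast h1
      have h2 : i - (r + u) = i - r - u := by omega
      have hs2 : (-1 : ℤ) ^ (i - r - u) * (-1 : ℤ) ^ u = (-1 : ℤ) ^ (i - r) := by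
        rw [← pow_add]; congr 1; omega
      have hu2 : (-1 : ℤ) ^ u * (-1 : ℤ) ^ u = 1 := by
        rw [← pow_add, ← two_mul, pow_mul]; norm_num
      rw [h2]
      linear_combination ((-1 : ℤ) ^ (i - r - u)) * h1'
        + ((i.choose r : ℤ) * ((i - r).choose u : ℤ) * (-1 : ℤ) ^ u) * hs2
        - ((i.choose r : ℤ) * ((i - r).choose u : ℤ) * (-1 : ℤ) ^ (i - r - u)) * hu2
    rw [Finset.sum_congr rfl key, ← Finset.mul_sum,
      Int.alternating_sum_range_choose_of_ne (show i - r ≠ 0 by omega), mul_zero]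
  · subst h
    rw [if_pos rfl, Finset.sum_eq_single r]
    · simp
    · intro t ht ht'
      have htr : t < r := by simp only [Finset.mem_range] at ht; omega
      simp [Nat.choose_eq_zero_of_lt htr]
    · intro hr
      exact absurd (Finset.self_mem_range_succ r) hr
  · rw [if_neg (show r ≠ i by omega)]
    apply Finset.sum_eq_zero
    intro t ht
    simp only [Finset.mem_range] at ht
    simp [Nat.choose_eq_zero_of_lt (show t < r by omega)]

/-- The iterated finite-difference coefficients of `t ↦ C(t*m, n)`. -/
noncomputable def auxA (m i n : ℕ) : ℤ :=
  ∑ t ∈ Finset.range (i + 1), (-1 : ℤ) ^ (i - t) * (i.choose t) * ((t * m).choose n : ℤ)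

lemma auxA_eq_fwdDiff (m i n : ℕ) :
    auxA m i n = (Δ_[1])^[i] (fun t : ℕ => ((t * m).choose n : ℤ)) 0 := by
  rw [fwdDiff_iter_eq_sum_shift]
  simp only [smul_eq_mul, mul_one, zero_add, auxA]

lemma auxA_rec (m i n : ℕ) :
    auxA m (i + 1) n = ∑ k ∈ Finset.range n, (m.choose (n - k) : ℤ) * auxA m i k := by
  have hfun : Δ_[1] (fun t : ℕ => ((t * m).choose n : ℤ))
      = fun t : ℕ => ∑ k ∈ Finset.range n, (m.choose (n - k) : ℤ) * ((t * m).choose k : ℤ) := by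
    funext t
    have hvdm : ((t * m + m).choose n : ℤ)
        = ∑ k ∈ Finset.range (n + 1), ((t * m).choose k : ℤ) * (m.choose (n - k) : ℤ) := by
      rw [Nat.add_choose_eq]
      push_cast [Finset.Nat.sum_antidiagonal_eq_sum_range_succ
        (fun a b => ((t * m).choose a) * (m.choose b)) n]
      ring
    have hmul : (t + 1) * m = t * m + m := by ring
    simp only [fwdDiff, hmul, hvdm, Finset.sum_range_succ, Nat.sub_self,
      Nat.choose_zero_right, Nat.cast_one, mul_one, add_sub_cancel_right]
    exact Finset.sum_congr rfl fun k _ => mul_comm _ _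
  rw [auxA_eq_fwdDiff, Function.iterate_succ_apply, hfun, fwdDiff_iter_eq_sum_shift]
  simp only [smul_eq_mul, mul_one, zero_add, Finset.mul_sum, auxA]
  rw [Finset.sum_comm]
  apply Finset.sum_congr rfl
  intro k _
  apply Finset.sum_congr rfl
  intro t _
  ring

lemma auxA_lt (m : ℕ) : ∀ i n : ℕ, n < i → auxA m i n = 0 := by
  intro i
  induction i with
  | zero => intro n hn; omega
  | succ i ih =>
    intro n hn
    rw [auxA_rec]
    apply Finset.sum_eq_zero
    intro k hk
    simp only [Finset.mem_range] at hk
    rw [ih k (by omega), mul_zero]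

lemma auxA_diag (m i : ℕ) : auxA m i i = (m : ℤ) ^ i := by
  induction i with
  | zero => simp [auxA]
  | succ i ih =>
    rw [auxA_rec, Finset.sum_eq_single i]
    · rw [ih]
      have h1 : i + 1 - i = 1 := by omega
      rw [h1, Nat.choose_one_right]
      ring
    · intro k hk hk'
      simp only [Finset.mem_range] at hk
      rw [auxA_lt m i k (by omega), mul_zero]
    · intro h
      exact absurd (Finset.self_mem_range_succ i) h
  
lemma auxA_super (m i : ℕ) (hm : 1 ≤ m) :
    2 * auxA m i (i + 1) = (i : ℤ) * (m : ℤ) ^ i * ((m : ℤ) - 1) := by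
  induction i with
  | zero =>
    simp [auxA]
  | succ i ih =>
    have hstep : auxA m (i + 1) (i + 2)
        = (m.choose 2 : ℤ) * auxA m i i + (m : ℤ) * auxA m i (i + 1) := by
      rw [auxA_rec]
      have hsplit : Finset.range (i + 2) = insert (i + 1) (Finset.range (i + 1)) := by
        rw [Finset.range_add_one]
      rw [hsplit, Finset.sum_insert (by simp)]
      have h1 : i + 2 - (i + 1) = 1 := by omega
      rw [h1, Nat.choose_one_right]
      rw [Finset.sum_eq_single i]
      · have h2 : i + 2 - i = 2 := by omega
        rw [h2]
        ring
      · intro k hk hk'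
        simp only [Finset.mem_range] at hk
        rw [auxA_lt m i k (by omega), mul_zero]
      · intro h
        exact absurd (Finset.self_mem_range_succ i) h
    have hc2 : (2 : ℤ) * (m.choose 2 : ℤ) = (m : ℤ) * ((m : ℤ) - 1) := by
      have h3 := Nat.choose_succ_right_eq m 1
      rw [Nat.choose_one_right] at h3
      have hcast : ((m.choose 2 * 2 : ℕ) : ℤ) = ((m * (m - 1) : ℕ) : ℤ) := by
        exact_mod_cast congrArg (Nat.cast : ℕ → ℤ) h3
      push_cast [Nat.cast_sub hm] at hcast
      linarith
    rw [hstep, auxA_diag]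
    push_cast
    linear_combination ((m : ℤ) ^ i) * hc2 + (m : ℤ) * ih

lemma aux_inversion (m : ℕ) (s : ℕ → ℕ → ℤ)
    (hs : ∀ j k : ℕ, ((k * m + 1).choose j : ℤ) =
      ∑ i ∈ Finset.range (j + 1), s j i * (k.choose i : ℤ)) (i : ℕ) :
    s (i + 1) i = ∑ t ∈ Finset.range (i + 1),
      (-1 : ℤ) ^ (i - t) * (i.choose t) * ((t * m + 1).choose (i + 1) : ℤ) := by
  have h1 : ∑ t ∈ Finset.range (i + 1),
      (-1 : ℤ) ^ (i - t) * (i.choose t) * ((t * m + 1).choose (i + 1) : ℤ)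
      = ∑ t ∈ Finset.range (i + 1), ∑ r ∈ Finset.range (i + 2),
          (-1 : ℤ) ^ (i - t) * (i.choose t) * (s (i + 1) r * (t.choose r : ℤ)) := by
    apply Finset.sum_congr rfl
    intro t ht
    rw [hs (i + 1) t, Finset.mul_sum]
  rw [h1, Finset.sum_comm]
  have h2 : ∀ r ∈ Finset.range (i + 2),
      ∑ t ∈ Finset.range (i + 1),
        (-1 : ℤ) ^ (i - t) * (i.choose t) * (s (i + 1) r * (t.choose r : ℤ))
      = s (i + 1) r * (if r = i then 1 else 0) := by
    intro r _
    rw [← aux_orth i r, Finset.mul_sum]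
    apply Finset.sum_congr rfl
    intro t ht
    ring
  rw [Finset.sum_congr rfl h2]
  simp only [mul_ite, mul_one, mul_zero]
  rw [Finset.sum_ite_eq' (Finset.range (i + 2)) i (fun r => s (i + 1) r)]
  rw [if_pos (by simp)]

theorem stmt_6 (m : ℕ) (hm : 2 ≤ m) (hodd : Odd m) (s : ℕ → ℕ → ℤ)
    (hs : ∀ j k : ℕ, ((k * m + 1).choose j : ℤ) =
      ∑ i ∈ Finset.range (j + 1), s j i * (k.choose i : ℤ))
    (i : ℕ) (hi : 1 ≤ i) : (m : ℤ) ^ i ∣ s (i + 1) i := by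
  obtain ⟨c, hc⟩ := hodd
  have hsi : s (i + 1) i = auxA m i (i + 1) + auxA m i i := by
    rw [aux_inversion m s hs i]
    have hchoose : ∀ t : ℕ, ((t * m + 1).choose (i + 1) : ℤ)
        = ((t * m).choose i : ℤ) + ((t * m).choose (i + 1) : ℤ) := by
      intro t
      exact_mod_cast congrArg (Nat.cast : ℕ → ℤ) (Nat.choose_succ_succ' (t * m) i)
    simp only [hchoose, mul_add]
    rw [Finset.sum_add_distrib, auxA, auxA]
    ring
  have hsuper := auxA_super m i (by omega)
  have hdiag := auxA_diag m i
  have hmc : (m : ℤ) = 2 * c + 1 := by exact_mod_cast hc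
  have key : 2 * s (i + 1) i = 2 * ((m : ℤ) ^ i * ((i : ℤ) * c + 1)) := by
    rw [hsi]
    rw [hmc] at hsuper hdiag ⊢
    linear_combination hsuper + 2 * hdiag
  refine ⟨(i : ℤ) * c + 1, ?_⟩
  exact mul_left_cancel₀ (by norm_num : (2 : ℤ) ≠ 0) key
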